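/- Let f:[a,b]×[c,d]→ℝ be absolutely continuous with bounded mixed second partial derivative: |∂²f/∂t∂s(t,s)| ≤ M on (a,b)×(c,d). Let a ≤ α₁ ≤ (a+b)/2 ≤ β₁ ≤ b and c ≤ α₂ ≤ (c+d)/2 ≤ β₂ ≤ d with α₁ < β₁ and α₂ < β₂. Define H = (α₁-a)[(α₂-c)f(a,c)+(d-β₂)f(a,d)] + (b-β₁)[(α₂-c)f(b,c)+(d-β₂)f(b,d)] and G = (β₁-α₁)[(α₂-c)f((a+b)/2,c)+(d-β₂)f((a+b)/2,d)] + (β₂-α₂)[(α₁-a)f(a,(c+d)/2)+(b-β₁)f(b,(c+d)/2)]. Then |(β₁-α₁)(β₂-α₂)f((a+b)/2,(c+d)/2) + H + G - (β₂-α₂)∫_a^b f(t,(c+d)/2) dt - (β₁-α₁)∫_c^d f((a+b)/2,s) ds - ∫_a^b [(α₂-c)f(t,c)+(d-β₂)f(t,d)] dt - ∫_c^d [(α₁-a)f(a,s)+(b-β₁)f(b,s)] ds + ∫_a^b∫_c^d f(t,s) ds dt| ≤ ([(α₁-a)²+(b-β₁)²]/2 + [(a+b-2α₁)²+(a+b-2β₁)²]/8)·([(α₂-c)²+(d-β₂)²]/2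 + [(c+d-2α₂)²+(c+d-2β₂)²]/8)·M. -/

import Mathlib

open Set intervalIntegral MeasureTheory

lemma sarik_ibp (g g' : ℝ → ℝ) (x y z : ℝ) (hxy : x ≤ y)
    (hdg : ∀ t ∈ Icc x y, HasDerivAt g (g' t) t)
    (hint : IntervalIntegrable (fun t => (t - z) * g' t) volume x y) :
    ∫ t in x..y, (t - z) * g' t
      = (y - z) * g y - (x - z) * g x - ∫ t in x..y, g t := by
  have hcont : ContinuousOn g (uIcc x y) := by
    rw [uIcc_of_le hxy]
    exact fun t ht => (hdg t ht).continuousAt.continuousWithinAt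
  have hgint : IntervalIntegrable g volume x y := hcont.intervalIntegrable
  have h := intervalIntegral.integral_eq_sub_of_hasDerivAt
    (f := fun t => (t - z) * g t)
    (f' := fun t => (t - z) * g' t + g t) (a := x) (b := y) ?_ ?_
  · have hsplit := intervalIntegral.integral_add hint hgint
    rw [hsplit] at h
    linarith [h]
  · intro t ht
    rw [uIcc_of_le hxy] at ht
    have := ((hasDerivAt_id t).sub_const z).mul (hdg t ht)
    exact this.congr_deriv (by show 1 * g t + (t - z) * g' t = _; ring)
  · exact hint.add hgint

lemma sarik_intabs (x y z : ℝ) (hxz : x ≤ z) (hzy : z ≤ y) :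
    ∫ t in x..y, |t - z| = ((z - x) ^ 2 + (y - z) ^ 2) / 2 := by
  have hcont : ∀ u v : ℝ, IntervalIntegrable (fun t => |t - z|) volume u v :=
    fun u v => ((continuous_id.sub continuous_const).abs).intervalIntegrable u v
  have h1 : ∫ t in x..z, |t - z| = (z - x) ^ 2 / 2 := by
    have heq : ∀ t ∈ uIcc x z, |t - z| = z - t := by
      intro t ht
      rw [uIcc_of_le hxz] at ht
      rw [abs_of_nonpos (by linarith [ht.2])]; ring
    rw [intervalIntegral.integral_congr heq, intervalIntegral.integral_sub
      (intervalIntegrable_const) (intervalIntegral.intervalIntegrable_id),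
      integral_id, intervalIntegral.integral_const]
    simp [smul_eq_mul]; ring
  have h2 : ∫ t in z..y, |t - z| = (y - z) ^ 2 / 2 := by
    have heq : ∀ t ∈ uIcc z y, |t - z| = t - z := by
      intro t ht
      rw [uIcc_of_le hzy] at ht
      rw [abs_of_nonneg (by linarith [ht.1])]
    rw [intervalIntegral.integral_congr heq, intervalIntegral.integral_sub
      (intervalIntegral.intervalIntegrable_id) (intervalIntegrable_const),
      integral_id, intervalIntegral.integral_const]
    simp [smul_eq_mul]; ring
  rw [← intervalIntegral.integral_add_adjacent_intervals (b := z) (hcont x z) (hcont z y),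
    h1, h2]
  ring
lemma sarik_aebound (x y : ℝ) (hxy : x ≤ y) (F g : ℝ → ℝ)
    (h : ∀ t ∈ Ioo x y, ‖F t‖ ≤ g t) :
    ∀ᵐ t ∂volume.restrict (uIoc x y), ‖F t‖ ≤ g t := by
  rw [uIoc_of_le hxy, ← Measure.restrict_congr_set Ioo_ae_eq_Ioc]
  exact (ae_restrict_iff' measurableSet_Ioo).2 (ae_of_all _ h)

lemma sarik_II (x y C : ℝ) (hxy : x ≤ y) (F : ℝ → ℝ)
    (hmeas : AEStronglyMeasurable F (volume.restrict (Ioc x y)))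
    (hbd : ∀ t ∈ Ioo x y, |F t| ≤ C) : IntervalIntegrable F volume x y := by
  rw [intervalIntegrable_iff_integrableOn_Ioc_of_le hxy]
  refine ⟨hmeas, HasFiniteIntegral.restrict_of_bounded (C := C) measure_Ioc_lt_top ?_⟩
  rw [← Measure.restrict_congr_set Ioo_ae_eq_Ioc]
  exact (ae_restrict_iff' measurableSet_Ioo).2 (ae_of_all _ fun t ht => by
    simpa [Real.norm_eq_abs] using hbd t ht)

lemma sarik_T1 (a b α₁ β₁ K : ℝ) (hab : a < b)
    (hα₁ : a ≤ α₁) (hα₁m : α₁ ≤ (a + b) / 2) (hmβ₁ : (a + b) / 2 ≤ β₁) (hβ₁ : β₁ ≤ b)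
    (D D₁ : ℝ → ℝ)
    (hD : ∀ t ∈ Icc a b, HasDerivAt D (D₁ t) t)
    (hmeas : AEStronglyMeasurable D₁ (volume.restrict (Ioc a b)))
    (hK : ∀ t ∈ Ioo a b, |D₁ t| ≤ K) :
    |(β₁ - α₁) * D ((a + b) / 2) + (α₁ - a) * D a + (b - β₁) * D b - ∫ t in a..b, D t|
      ≤ (((α₁ - a) ^ 2 + (b - β₁) ^ 2) / 2
          + ((a + b - 2 * α₁) ^ 2 + (a + b - 2 * β₁) ^ 2) / 8) * K := by
  set m : ℝ := (a + b) / 2 with hmdef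
  have ham : a ≤ m := by rw [hmdef]; linarith
  have hmb : m ≤ b := by rw [hmdef]; linarith
  have hamlt : a < m := by rw [hmdef]; linarith
  have hmblt : m < b := by rw [hmdef]; linarith
  have hK0 : 0 ≤ K := le_trans (abs_nonneg _) (hK m ⟨hamlt, hmblt⟩)
  have hsub1 : Ioo a m ⊆ Ioo a b := Ioo_subset_Ioo_right hmb
  have hsub2 : Ioo m b ⊆ Ioo a b := Ioo_subset_Ioo_left ham
  -- measurability of integrands
  have hmeas1 : AEStronglyMeasurable (fun t => (t - α₁) * D₁ t)
      (volume.restrict (Ioc a m)) :=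
    ((measurable_id.sub_const α₁).aestronglyMeasurable).mul
      (hmeas.mono_measure (Measure.restrict_mono (Ioc_subset_Ioc_right hmb) le_rfl))
  have hmeas2 : AEStronglyMeasurable (fun t => (t - β₁) * D₁ t)
      (volume.restrict (Ioc m b)) :=
    ((measurable_id.sub_const β₁).aestronglyMeasurable).mul
      (hmeas.mono_measure (Measure.restrict_mono (Ioc_subset_Ioc_left ham) le_rfl))
  have habs : ∀ z ∈ Icc a b, ∀ t ∈ Ioo a b, |t - z| ≤ b - a := by
    intro z hz t ht
    rw [abs_le]
    constructor <;> [linarith [ht.1, hz.2]; linarith [ht.2, hz.1]]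
  have hbd : ∀ z ∈ Icc a b, ∀ t ∈ Ioo a b, |(t - z) * D₁ t| ≤ (b - a) * K := by
    intro z hz t ht
    rw [abs_mul]
    exact mul_le_mul (habs z hz t ht) (hK t ht) (abs_nonneg _) (by linarith)
  have hint1 : IntervalIntegrable (fun t => (t - α₁) * D₁ t) volume a m :=
    sarik_II a m ((b - a) * K) ham _ hmeas1
      (fun t ht => hbd α₁ ⟨hα₁, le_trans hα₁m hmβ₁ |>.trans hβ₁⟩ t (hsub1 ht))
  have hint2 : IntervalIntegrable (fun t => (t - β₁) * D₁ t) volume m b :=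
    sarik_II m b ((b - a) * K) hmb _ hmeas2
      (fun t ht => hbd β₁ ⟨le_trans hα₁ (hα₁m.trans hmβ₁), hβ₁⟩ t (hsub2 ht))
  have I₁ := sarik_ibp D D₁ a m α₁ ham
    (fun t ht => hD t ⟨ht.1, le_trans ht.2 hmb⟩) hint1
  have I₂ := sarik_ibp D D₁ m b β₁ hmb
    (fun t ht => hD t ⟨le_trans ham ht.1, ht.2⟩) hint2
  have hDcont : ContinuousOn D (Icc a b) := fun t ht =>
    (hD t ht).continuousAt.continuousWithinAt
  have hDi1 : IntervalIntegrable D volume a m :=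
    (hDcont.mono (by rw [uIcc_of_le ham]; exact Icc_subset_Icc le_rfl hmb)).intervalIntegrable
  have hDi2 : IntervalIntegrable D volume m b :=
    (hDcont.mono (by rw [uIcc_of_le hmb]; exact Icc_subset_Icc ham le_rfl)).intervalIntegrable
  have hDsplit := intervalIntegral.integral_add_adjacent_intervals hDi1 hDi2
  -- bounds on the two integrals
  have hb1 : |∫ t in a..m, (t - α₁) * D₁ t| ≤ ((α₁ - a) ^ 2 + (m - α₁) ^ 2) / 2 * K := by
    have h := intervalIntegral.norm_integral_le_of_norm_le (μ := volume)
      (f := fun t => (t - α₁) * D₁ t) (g := fun t => |t - α₁| * K) (a := a) (b := m) ham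
      ((ae_restrict_iff' measurableSet_Ioc).1 (by
        rw [← uIoc_of_le ham]
        exact sarik_aebound a m ham _ _ (fun t ht => by
        rw [Real.norm_eq_abs, abs_mul]
        exact mul_le_mul_of_nonneg_left (hK t (hsub1 ht)) (abs_nonneg _))))
      (((continuous_id.sub continuous_const).abs.mul continuous_const).intervalIntegrable a m)
    rw [Real.norm_eq_abs] at h
    have hg : ∫ t in a..m, |t - α₁| * K = ((α₁ - a) ^ 2 + (m - α₁) ^ 2) / 2 * K := by
      rw [intervalIntegral.integral_mul_const, sarik_intabs a m α₁ hα₁ hα₁m]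
    rw [hg] at h
    exact h
  have hb2 : |∫ t in m..b, (t - β₁) * D₁ t| ≤ ((β₁ - m) ^ 2 + (b - β₁) ^ 2) / 2 * K := by
    have h := intervalIntegral.norm_integral_le_of_norm_le (μ := volume)
      (f := fun t => (t - β₁) * D₁ t) (g := fun t => |t - β₁| * K) (a := m) (b := b) hmb
      ((ae_restrict_iff' measurableSet_Ioc).1 (by
        rw [← uIoc_of_le hmb]
        exact sarik_aebound m b hmb _ _ (fun t ht => by
        rw [Real.norm_eq_abs, abs_mul]
        exact mul_le_mul_of_nonneg_left (hK t (hsub2 ht)) (abs_nonneg _))))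
      (((continuous_id.sub continuous_const).abs.mul continuous_const).intervalIntegrable m b)
    rw [Real.norm_eq_abs] at h
    have hg : ∫ t in m..b, |t - β₁| * K = ((β₁ - m) ^ 2 + (b - β₁) ^ 2) / 2 * K := by
      rw [intervalIntegral.integral_mul_const, sarik_intabs m b β₁ hmβ₁ hβ₁]
    rw [hg] at h
    exact h
  have hX : (β₁ - α₁) * D m + (α₁ - a) * D a + (b - β₁) * D b - ∫ t in a..b, D t
      = (∫ t in a..m, (t - α₁) * D₁ t) + ∫ t in m..b, (t - β₁) * D₁ t := by
    rw [I₁, I₂, ← hDsplit]; ring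
  rw [hX]
  calc |(∫ t in a..m, (t - α₁) * D₁ t) + ∫ t in m..b, (t - β₁) * D₁ t|
      ≤ |∫ t in a..m, (t - α₁) * D₁ t| + |∫ t in m..b, (t - β₁) * D₁ t| := abs_add_le _ _
    _ ≤ ((α₁ - a) ^ 2 + (m - α₁) ^ 2) / 2 * K + ((β₁ - m) ^ 2 + (b - β₁) ^ 2) / 2 * K :=
        add_le_add hb1 hb2
    _ = (((α₁ - a) ^ 2 + (b - β₁) ^ 2) / 2
          + ((a + b - 2 * α₁) ^ 2 + (a + b - 2 * β₁) ^ 2) / 8) * K := by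
        rw [hmdef]; ring
lemma sarik_T2 (c d α₂ β₂ L : ℝ) (hcd : c < d)
    (hα₂ : c ≤ α₂) (hα₂m : α₂ ≤ (c + d) / 2) (hmβ₂ : (c + d) / 2 ≤ β₂) (hβ₂ : β₂ ≤ d)
    (k : ℝ → ℝ) (hk : IntervalIntegrable k volume c d)
    (hL : ∀ s ∈ Icc c d, ∀ s' ∈ Icc c d, |k s - k s'| ≤ L * |s - s'|) :
    |(β₂ - α₂) * k ((c + d) / 2) + (α₂ - c) * k c + (d - β₂) * k d - ∫ s in c..d, k s|
      ≤ (((α₂ - c) ^ 2 + (d - β₂) ^ 2) / 2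
          + ((c + d - 2 * α₂) ^ 2 + (c + d - 2 * β₂) ^ 2) / 8) * L := by
  set m : ℝ := (c + d) / 2 with hmdef
  have hcm : c ≤ m := by rw [hmdef]; linarith
  have hmd : m ≤ d := by rw [hmdef]; linarith
  have hL0 : 0 ≤ L := by
    have h := hL c ⟨le_rfl, le_of_lt hcd⟩ d ⟨le_of_lt hcd, le_rfl⟩
    nlinarith [abs_nonneg (k c - k d), abs_of_pos (sub_pos.mpr hcd), abs_sub_comm c d]
  have hmono : ∀ x y : ℝ, c ≤ x → x ≤ y → y ≤ d → IntervalIntegrable k volume x y := by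
    intro x y hh1 hh2 hh3
    refine hk.mono_set ?_
    rw [uIcc_of_le hh2, uIcc_of_le (le_of_lt hcd)]
    exact Icc_subset_Icc hh1 hh3
  have h1 := hmono c α₂ le_rfl hα₂ (by linarith)
  have h2 := hmono α₂ m hα₂ hα₂m (by linarith)
  have h3 := hmono m β₂ (by linarith) hmβ₂ (by linarith)
  have h4 := hmono β₂ d (by linarith) hβ₂ le_rfl
  have hsplit : ∫ s in c..d, k s = (∫ s in c..α₂, k s) + (∫ s in α₂..m, k s)
      + (∫ s in m..β₂, k s) + (∫ s in β₂..d, k s) := by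
    have e1 := intervalIntegral.integral_add_adjacent_intervals h1 h2
    have e2 := intervalIntegral.integral_add_adjacent_intervals (h1.trans h2) h3
    have e3 := intervalIntegral.integral_add_adjacent_intervals ((h1.trans h2).trans h3) h4
    linarith
  have hP : ∀ x y z : ℝ, c ≤ x → x ≤ y → y ≤ d → IntervalIntegrable k volume x y →
      ∫ s in x..y, (k z - k s) = (y - x) * k z - ∫ s in x..y, k s := by
    intro x y z _ _ _ hki
    rw [intervalIntegral.integral_sub intervalIntegrable_const hki,
      intervalIntegral.integral_const, smul_eq_mul]
  have hX : (β₂ - α₂) * k m + (α₂ - c) * k c + (d - β₂) * k d - ∫ s in c..d, k s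
      = (∫ s in c..α₂, (k c - k s)) + (∫ s in α₂..m, (k m - k s))
        + (∫ s in m..β₂, (k m - k s)) + (∫ s in β₂..d, (k d - k s)) := by
    rw [hP c α₂ c le_rfl hα₂ (by linarith) h1, hP α₂ m m hα₂ hα₂m (by linarith) h2,
      hP m β₂ m (by linarith) hmβ₂ (by linarith) h3, hP β₂ d d (by linarith) hβ₂ le_rfl h4,
      hsplit]
    ring
  have hpiece : ∀ x y z : ℝ, c ≤ x → x ≤ y → y ≤ d → x ≤ z → z ≤ y → z ∈ Icc c d →
      |∫ s in x..y, (k z - k s)| ≤ ((z - x) ^ 2 + (y - z) ^ 2) / 2 * L := by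
    intro x y z hcx hxy hyd hxz hzy hz
    have h := intervalIntegral.norm_integral_le_of_norm_le (μ := volume)
      (f := fun s => k z - k s) (g := fun s => L * |s - z|) (a := x) (b := y)
      ?_ ?_ ?_
    · rw [Real.norm_eq_abs, intervalIntegral.integral_const_mul,
        sarik_intabs x y z hxz hzy] at h
      calc |∫ s in x..y, (k z - k s)| ≤ L * (((z - x) ^ 2 + (y - z) ^ 2) / 2) := h
        _ = ((z - x) ^ 2 + (y - z) ^ 2) / 2 * L := by ring
    · exact hxy
    · rw [← ae_restrict_iff' measurableSet_Ioc]
      refine (ae_restrict_iff' measurableSet_Ioc).2 (ae_of_all _ fun s hs => ?_)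
      have hsIcc : s ∈ Icc c d := ⟨le_trans hcx (le_of_lt hs.1), le_trans hs.2 hyd⟩
      have h5 := hL z hz s hsIcc
      show |k z - k s| ≤ L * |s - z|
      rwa [abs_sub_comm z s] at h5
    · exact (continuous_const.mul ((continuous_id.sub continuous_const).abs)).intervalIntegrable x y
  rw [hX]
  have b1 := hpiece c α₂ c le_rfl hα₂ (by linarith) le_rfl hα₂ ⟨le_rfl, le_of_lt hcd⟩
  have b2 := hpiece α₂ m m hα₂ hα₂m (by linarith) hα₂m le_rfl ⟨hcm, hmd⟩
  have b3 := hpiece m β₂ m (by linarith) hmβ₂ (by linarith) le_rfl hmβ₂ ⟨hcm, hmd⟩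
  have b4 := hpiece β₂ d d (by linarith) hβ₂ le_rfl hβ₂ le_rfl ⟨le_of_lt hcd, le_rfl⟩
  have habs := abs_add_le
    ((∫ s in c..α₂, (k c - k s)) + (∫ s in α₂..m, (k m - k s)) + ∫ s in m..β₂, (k m - k s))
    (∫ s in β₂..d, (k d - k s))
  have habs2 := abs_add_le
    ((∫ s in c..α₂, (k c - k s)) + (∫ s in α₂..m, (k m - k s)))
    (∫ s in m..β₂, (k m - k s))
  have habs3 := abs_add_le (∫ s in c..α₂, (k c - k s)) (∫ s in α₂..m, (k m - k s))
  have hfin : ((c - c) ^ 2 + (α₂ - c) ^ 2) / 2 * L + ((m - α₂) ^ 2 + (m - m) ^ 2) / 2 * L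
      + ((m - m) ^ 2 + (β₂ - m) ^ 2) / 2 * L + ((d - β₂) ^ 2 + (d - d) ^ 2) / 2 * L
      = (((α₂ - c) ^ 2 + (d - β₂) ^ 2) / 2
          + ((c + d - 2 * α₂) ^ 2 + (c + d - 2 * β₂) ^ 2) / 8) * L := by
    rw [hmdef]; ring
  linarith [b1, b2, b3, b4, habs, habs2, habs3]

theorem sarikaya_main (a b c d M : ℝ) (hab : a < b) (hcd : c < d)
    (α₁ β₁ α₂ β₂ : ℝ)
    (hα₁ : a ≤ α₁) (hα₁m : α₁ ≤ (a + b) / 2) (hmβ₁ : (a + b) / 2 ≤ β₁) (hβ₁ : β₁ ≤ b)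
    (hα₂ : c ≤ α₂) (hα₂m : α₂ ≤ (c + d) / 2) (hmβ₂ : (c + d) / 2 ≤ β₂) (hβ₂ : β₂ ≤ d)
    (hαβ₁ : α₁ < β₁) (hαβ₂ : α₂ < β₂)
    (f f₁ f₂ : ℝ → ℝ → ℝ)
    (hc : ContinuousOn (fun p : ℝ × ℝ => f p.1 p.2) (Set.Icc a b ×ˢ Set.Icc c d))
    (hd1 : ∀ t ∈ Set.Icc a b, ∀ s ∈ Set.Icc c d, HasDerivAt (fun u => f u s) (f₁ t s) t)
    (hd2 : ∀ t ∈ Set.Ioo a b, ∀ s ∈ Set.Ioo c d, HasDerivAt (fun v => f₁ t v) (f₂ t s) s)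
    (hM : ∀ t ∈ Set.Ioo a b, ∀ s ∈ Set.Ioo c d, |f₂ t s| ≤ M)
    (H G : ℝ)
    (hH : H = (α₁ - a) * ((α₂ - c) * f a c + (d - β₂) * f a d)
        + (b - β₁) * ((α₂ - c) * f b c + (d - β₂) * f b d))
    (hG : G = (β₁ - α₁) * ((α₂ - c) * f ((a + b) / 2) c + (d - β₂) * f ((a + b) / 2) d)
        + (β₂ - α₂) * ((α₁ - a) * f a ((c + d) / 2) + (b - β₁) * f b ((c + d) / 2))) :
    |(β₁ - α₁) * (β₂ - α₂) * f ((a + b) / 2) ((c + d) / 2) + H + G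
        - (β₂ - α₂) * (∫ t in a..b, f t ((c + d) / 2))
        - (β₁ - α₁) * (∫ s in c..d, f ((a + b) / 2) s)
        - (∫ t in a..b, (α₂ - c) * f t c + (d - β₂) * f t d)
        - (∫ s in c..d, (α₁ - a) * f a s + (b - β₁) * f b s)
        + ∫ t in a..b, ∫ s in c..d, f t s| ≤
      (((α₁ - a) ^ 2 + (b - β₁) ^ 2) / 2
          + ((a + b - 2 * α₁) ^ 2 + (a + b - 2 * β₁) ^ 2) / 8) *
        (((α₂ - c) ^ 2 + (d - β₂) ^ 2) / 2
          + ((c + d - 2 * α₂) ^ 2 + (c + d - 2 * β₂) ^ 2) / 8) * M := by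
  have habm : a < (a + b) / 2 := by linarith
  have hmb : (a + b) / 2 < b := by linarith
  have hcdm : c < (c + d) / 2 := by linarith
  have hmd : (c + d) / 2 < d := by linarith
  -- Kernel bound chain
  have kb1 : ∀ t ∈ Ioo a b, ∀ s ∈ Ioo c d, ∀ s' ∈ Ioo c d,
      |f₁ t s - f₁ t s'| ≤ M * |s - s'| := by
    intro t ht s hs s' hs'
    have h := Convex.norm_image_sub_le_of_norm_hasDerivWithin_le
      (f := f₁ t) (f' := f₂ t) (C := M)
      (fun σ hσ => (hd2 t ht σ hσ).hasDerivWithinAt)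
      (fun σ hσ => by simpa [Real.norm_eq_abs] using hM t ht σ hσ)
      (convex_Ioo c d) hs' hs
    simpa [Real.norm_eq_abs] using h
  have kb2 : ∀ s ∈ Ioo c d, ∀ s' ∈ Ioo c d, ∀ u ∈ Ioo a b, ∀ v ∈ Ioo a b,
      |f u s - f u s' - (f v s - f v s')| ≤ M * |s - s'| * |u - v| := by
    intro s hs s' hs' u hu v hv
    have h := Convex.norm_image_sub_le_of_norm_hasDerivWithin_le
      (f := fun x => f x s - f x s') (f' := fun x => f₁ x s - f₁ x s') (C := M * |s - s'|)
      (fun x hx => (((hd1 x (Ioo_subset_Icc_self hx) s (Ioo_subset_Icc_self hs)).sub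
        (hd1 x (Ioo_subset_Icc_self hx) s' (Ioo_subset_Icc_self hs'))).hasDerivWithinAt))
      (fun x hx => by simpa [Real.norm_eq_abs] using kb1 x hx s hs s' hs')
      (convex_Ioo a b) hv hu
    simpa [Real.norm_eq_abs] using h
  have kb3 : ∀ u ∈ Ioo a b, ∀ v ∈ Ioo a b, ∀ s ∈ Icc c d, ∀ s' ∈ Icc c d,
      |f u s - f u s' - (f v s - f v s')| ≤ M * |s - s'| * |u - v| := by
    intro u hu v hv
    set g : ℝ × ℝ → ℝ := fun q =>
      M * |q.1 - q.2| * |u - v| - |f u q.1 - f u q.2 - (f v q.1 - f v q.2)| with hgdef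
    have hfw : ∀ w ∈ Icc a b, ContinuousOn (fun q : ℝ × ℝ => f w q.1)
        (Icc c d ×ˢ Icc c d) := by
      intro w hw
      have h : ContinuousOn ((fun p : ℝ × ℝ => f p.1 p.2) ∘ (fun q : ℝ × ℝ => (w, q.1)))
          (Icc c d ×ˢ Icc c d) :=
        hc.comp (Continuous.continuousOn (continuous_const.prodMk continuous_fst))
          (fun q hq => ⟨hw, hq.1⟩)
      exact h
    have hfw2 : ∀ w ∈ Icc a b, ContinuousOn (fun q : ℝ × ℝ => f w q.2)
        (Icc c d ×ˢ Icc c d) := by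
      intro w hw
      have h : ContinuousOn ((fun p : ℝ × ℝ => f p.1 p.2) ∘ (fun q : ℝ × ℝ => (w, q.2)))
          (Icc c d ×ˢ Icc c d) :=
        hc.comp (Continuous.continuousOn (continuous_const.prodMk continuous_snd))
          (fun q hq => ⟨hw, hq.2⟩)
      exact h
    have huI : u ∈ Icc a b := Ioo_subset_Icc_self hu
    have hvI : v ∈ Icc a b := Ioo_subset_Icc_self hv
    have hgcont : ContinuousOn g (Icc c d ×ˢ Icc c d) := by
      apply ContinuousOn.sub
      · exact Continuous.continuousOn (by fun_prop)
      · exact ((((hfw u huI).sub (hfw2 u huI)).sub ((hfw v hvI).sub (hfw2 v hvI))).abs)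
    have hclosed : IsClosed ((Icc c d ×ˢ Icc c d) ∩ g ⁻¹' (Ici 0)) :=
      hgcont.preimage_isClosed_of_isClosed (isClosed_Icc.prod isClosed_Icc) isClosed_Ici
    have hsubset : (Ioo c d ×ˢ Ioo c d) ⊆ (Icc c d ×ˢ Icc c d) ∩ g ⁻¹' (Ici 0) := by
      intro q hq
      refine ⟨⟨Ioo_subset_Icc_self hq.1, Ioo_subset_Icc_self hq.2⟩, ?_⟩
      have h := kb2 q.1 hq.1 q.2 hq.2 u hu v hv
      simp only [hgdef, mem_preimage, mem_Ici]
      linarith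
    have hclos : (Icc c d ×ˢ Icc c d) ⊆ (Icc c d ×ˢ Icc c d) ∩ g ⁻¹' (Ici 0) := by
      have h1 : closure (Ioo c d ×ˢ Ioo c d) = Icc c d ×ˢ Icc c d := by
        rw [closure_prod_eq, closure_Ioo hcd.ne]
      have cm := closure_minimal hsubset hclosed
      rwa [h1] at cm
    intro s hs s' hs'
    have hmem := hclos (Set.mk_mem_prod hs hs')
    have h := hmem.2
    simp only [hgdef, mem_preimage, mem_Ici] at h
    linarith
  have kb4 : ∀ t ∈ Ioo a b, ∀ s ∈ Icc c d, ∀ s' ∈ Icc c d,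
      |f₁ t s - f₁ t s'| ≤ M * |s - s'| := by
    intro t ht s hs s' hs'
    have hD : HasDerivAt (fun u => f u s - f u s') (f₁ t s - f₁ t s') t :=
      (hd1 t (Ioo_subset_Icc_self ht) s hs).sub (hd1 t (Ioo_subset_Icc_self ht) s' hs')
    rw [hasDerivAt_iff_tendsto_slope] at hD
    have habs : Filter.Tendsto (fun u => |slope (fun u => f u s - f u s') t u|)
        (nhdsWithin t {t}ᶜ) (nhds |f₁ t s - f₁ t s'|) := hD.abs
    refine le_of_tendsto habs ?_
    have hIoo : Ioo a b ∈ nhdsWithin t {t}ᶜ := nhdsWithin_le_nhds (Ioo_mem_nhds ht.1 ht.2)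
    filter_upwards [hIoo, self_mem_nhdsWithin] with u hu hut
    have hne : u - t ≠ 0 := sub_ne_zero.mpr hut
    rw [slope_def_field, abs_div, div_le_iff₀ (abs_pos.mpr hne)]
    exact kb3 u hu t ht s hs s' hs'
  have hMnn : 0 ≤ M := le_trans (abs_nonneg _)
    (hM ((a + b) / 2) ⟨habm, hmb⟩ ((c + d) / 2) ⟨hcdm, hmd⟩)
  -- continuity in each variable separately
  have hcont_t : ∀ y ∈ Icc c d, ContinuousOn (fun t => f t y) (Icc a b) := by
    intro y hy
    have h : ContinuousOn ((fun p : ℝ × ℝ => f p.1 p.2) ∘ (fun t : ℝ => ((t, y) : ℝ × ℝ)))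
        (Icc a b) :=
      hc.comp (Continuous.continuousOn (continuous_id.prodMk continuous_const))
        (fun t ht => ⟨ht, hy⟩)
    exact h
  have hcont_s : ∀ x ∈ Icc a b, ContinuousOn (fun s => f x s) (Icc c d) := by
    intro x hx
    have h : ContinuousOn ((fun p : ℝ × ℝ => f p.1 p.2) ∘ (fun s : ℝ => ((x, s) : ℝ × ℝ)))
        (Icc c d) :=
      hc.comp (Continuous.continuousOn (continuous_const.prodMk continuous_id))
        (fun s hs => ⟨hx, hs⟩)
    exact h
  have hIIt : ∀ y ∈ Icc c d, IntervalIntegrable (fun t => f t y) volume a b := by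
    intro y hy
    have h : ContinuousOn (fun t => f t y) (uIcc a b) := by
      rw [uIcc_of_le hab.le]; exact hcont_t y hy
    exact h.intervalIntegrable
  have hIIs : ∀ x ∈ Icc a b, IntervalIntegrable (fun s => f x s) volume c d := by
    intro x hx
    have h : ContinuousOn (fun s => f x s) (uIcc c d) := by
      rw [uIcc_of_le hcd.le]; exact hcont_s x hx
    exact h.intervalIntegrable
  -- measurability of the partial derivative in t
  have hmeasf₁ : ∀ s ∈ Icc c d,
      AEStronglyMeasurable (fun t => f₁ t s) (volume.restrict (Ioc a b)) := by
    intro s hs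
    refine ((measurable_deriv (fun u => f u s)).aestronglyMeasurable).congr ?_
    refine (ae_restrict_iff' measurableSet_Ioc).2 (ae_of_all _ fun t ht => ?_)
    exact (hd1 t ⟨le_of_lt ht.1, ht.2⟩ s hs).deriv
  -- the auxiliary function k₀
  set k₀ : ℝ → ℝ := fun s => (β₁ - α₁) * f ((a + b) / 2) s + (α₁ - a) * f a s
      + (b - β₁) * f b s - ∫ t in a..b, f t s with hk₀def
  -- Lipschitz bound for k₀
  have hlip : ∀ s ∈ Icc c d, ∀ s' ∈ Icc c d,
      |k₀ s - k₀ s'| ≤ ((((α₁ - a) ^ 2 + (b - β₁) ^ 2) / 2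
          + ((a + b - 2 * α₁) ^ 2 + (a + b - 2 * β₁) ^ 2) / 8) * M) * |s - s'| := by
    intro s hs s' hs'
    have hD : ∀ t ∈ Icc a b, HasDerivAt (fun u => f u s - f u s') (f₁ t s - f₁ t s') t :=
      fun t ht => (hd1 t ht s hs).sub (hd1 t ht s' hs')
    have hmeasD : AEStronglyMeasurable (fun t => f₁ t s - f₁ t s')
        (volume.restrict (Ioc a b)) := (hmeasf₁ s hs).sub (hmeasf₁ s' hs')
    have hKD : ∀ t ∈ Ioo a b, |f₁ t s - f₁ t s'| ≤ M * |s - s'| :=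
      fun t ht => kb4 t ht s hs s' hs'
    have h := sarik_T1 a b α₁ β₁ (M * |s - s'|) hab hα₁ hα₁m hmβ₁ hβ₁
      (fun u => f u s - f u s') (fun t => f₁ t s - f₁ t s') hD hmeasD hKD
    have hdiff : k₀ s - k₀ s' = (β₁ - α₁) * (f ((a + b) / 2) s - f ((a + b) / 2) s')
        + (α₁ - a) * (f a s - f a s') + (b - β₁) * (f b s - f b s')
        - ∫ t in a..b, (f t s - f t s') := by
      simp only [hk₀def]
      rw [intervalIntegral.integral_sub (hIIt s hs) (hIIt s' hs')]
      ring
    rw [hdiff]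
    calc |(β₁ - α₁) * (f ((a + b) / 2) s - f ((a + b) / 2) s')
        + (α₁ - a) * (f a s - f a s') + (b - β₁) * (f b s - f b s')
        - ∫ t in a..b, (f t s - f t s')|
        ≤ (((α₁ - a) ^ 2 + (b - β₁) ^ 2) / 2
          + ((a + b - 2 * α₁) ^ 2 + (a + b - 2 * β₁) ^ 2) / 8) * (M * |s - s'|) := h
      _ = ((((α₁ - a) ^ 2 + (b - β₁) ^ 2) / 2
          + ((a + b - 2 * α₁) ^ 2 + (a + b - 2 * β₁) ^ 2) / 8) * M) * |s - s'| := by ring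
  -- Fubini setup
  have hprodIcc : IntegrableOn (fun p : ℝ × ℝ => f p.1 p.2) (Icc a b ×ˢ Icc c d) volume :=
    hc.integrableOn_compact (isCompact_Icc.prod isCompact_Icc)
  have hprod : Integrable (fun p : ℝ × ℝ => f p.1 p.2)
      ((volume.restrict (Ioc a b)).prod (volume.restrict (Ioc c d))) := by
    rw [Measure.prod_restrict, ← Measure.volume_eq_prod]
    exact hprodIcc.mono_set (prod_mono Ioc_subset_Icc_self Ioc_subset_Icc_self)
  have hmarg : IntegrableOn (fun s => ∫ t in a..b, f t s) (Ioc c d) volume := by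
    have h := hprod.integral_prod_right
    refine h.congr (ae_of_all _ fun s => ?_)
    show ∫ x in Ioc a b, f x s = ∫ t in a..b, f t s
    rw [intervalIntegral.integral_of_le hab.le]
  have hmargII : IntervalIntegrable (fun s => ∫ t in a..b, f t s) volume c d := by
    rw [intervalIntegrable_iff_integrableOn_Ioc_of_le hcd.le]
    exact hmarg
  have hswap : ∫ t in a..b, ∫ s in c..d, f t s = ∫ s in c..d, ∫ t in a..b, f t s := by
    rw [intervalIntegral.integral_of_le hab.le, intervalIntegral.integral_of_le hcd.le]
    simp_rw [intervalIntegral.integral_of_le hcd.le, intervalIntegral.integral_of_le hab.le]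
    exact MeasureTheory.integral_integral_swap (by exact hprod)
  -- integrability of k₀ on c..d
  have hk₀II : IntervalIntegrable k₀ volume c d := by
    rw [intervalIntegrable_iff_integrableOn_Ioc_of_le hcd.le]
    have hIOs : ∀ x ∈ Icc a b, IntegrableOn (fun s => f x s) (Ioc c d) volume :=
      fun x hx => ((hcont_s x hx).integrableOn_compact isCompact_Icc).mono_set
        Ioc_subset_Icc_self
    simp only [hk₀def]
    exact ((((hIOs ((a + b) / 2) ⟨habm.le, hmb.le⟩).const_mul _).add
      ((hIOs a ⟨le_rfl, hab.le⟩).const_mul _)).add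
      ((hIOs b ⟨hab.le, le_rfl⟩).const_mul _)).sub hmarg
  -- expansions
  have hXsum : ∫ t in a..b, ((α₂ - c) * f t c + (d - β₂) * f t d)
      = (α₂ - c) * (∫ t in a..b, f t c) + (d - β₂) * (∫ t in a..b, f t d) := by
    rw [intervalIntegral.integral_add ((hIIt c ⟨le_rfl, hcd.le⟩).const_mul _)
      ((hIIt d ⟨hcd.le, le_rfl⟩).const_mul _),
      intervalIntegral.integral_const_mul, intervalIntegral.integral_const_mul]
  have hYsum : ∫ s in c..d, ((α₁ - a) * f a s + (b - β₁) * f b s)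
      = (α₁ - a) * (∫ s in c..d, f a s) + (b - β₁) * (∫ s in c..d, f b s) := by
    rw [intervalIntegral.integral_add ((hIIs a ⟨le_rfl, hab.le⟩).const_mul _)
      ((hIIs b ⟨hab.le, le_rfl⟩).const_mul _),
      intervalIntegral.integral_const_mul, intervalIntegral.integral_const_mul]
  have hk₀int : ∫ s in c..d, k₀ s
      = (β₁ - α₁) * (∫ s in c..d, f ((a + b) / 2) s) + (α₁ - a) * (∫ s in c..d, f a s)
        + (b - β₁) * (∫ s in c..d, f b s) - ∫ s in c..d, (∫ t in a..b, f t s) := by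
    have i1 := (hIIs ((a + b) / 2) ⟨habm.le, hmb.le⟩).const_mul (β₁ - α₁)
    have i2 := (hIIs a ⟨le_rfl, hab.le⟩).const_mul (α₁ - a)
    have i3 := (hIIs b ⟨hab.le, le_rfl⟩).const_mul (b - β₁)
    simp only [hk₀def]
    rw [intervalIntegral.integral_sub ((i1.add i2).add i3) hmargII,
      intervalIntegral.integral_add (i1.add i2) i3,
      intervalIntegral.integral_add i1 i2,
      intervalIntegral.integral_const_mul, intervalIntegral.integral_const_mul,
      intervalIntegral.integral_const_mul]
  -- apply the outer bound
  have key := sarik_T2 c d α₂ β₂ ((((α₁ - a) ^ 2 + (b - β₁) ^ 2) / 2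
      + ((a + b - 2 * α₁) ^ 2 + (a + b - 2 * β₁) ^ 2) / 8) * M)
    hcd hα₂ hα₂m hmβ₂ hβ₂ k₀ hk₀II hlip
  have hEeq : (β₁ - α₁) * (β₂ - α₂) * f ((a + b) / 2) ((c + d) / 2) + H + G
        - (β₂ - α₂) * (∫ t in a..b, f t ((c + d) / 2))
        - (β₁ - α₁) * (∫ s in c..d, f ((a + b) / 2) s)
        - (∫ t in a..b, (α₂ - c) * f t c + (d - β₂) * f t d)
        - (∫ s in c..d, (α₁ - a) * f a s + (b - β₁) * f b s)
        + (∫ t in a..b, ∫ s in c..d, f t s)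
      = (β₂ - α₂) * k₀ ((c + d) / 2) + (α₂ - c) * k₀ c + (d - β₂) * k₀ d
        - ∫ s in c..d, k₀ s := by
    rw [hH, hG, hXsum, hYsum, hk₀int, hswap]
    simp only [hk₀def]
    ring
  rw [hEeq]
  calc |(β₂ - α₂) * k₀ ((c + d) / 2) + (α₂ - c) * k₀ c + (d - β₂) * k₀ d
      - ∫ s in c..d, k₀ s|
      ≤ (((α₂ - c) ^ 2 + (d - β₂) ^ 2) / 2
          + ((c + d - 2 * α₂) ^ 2 + (c + d - 2 * β₂) ^ 2) / 8)
        * ((((α₁ - a) ^ 2 + (b - β₁) ^ 2) / 2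
          + ((a + b - 2 * α₁) ^ 2 + (a + b - 2 * β₁) ^ 2) / 8) * M) := key
    _ = (((α₁ - a) ^ 2 + (b - β₁) ^ 2) / 2
          + ((a + b - 2 * α₁) ^ 2 + (a + b - 2 * β₁) ^ 2) / 8) *
        (((α₂ - c) ^ 2 + (d - β₂) ^ 2) / 2
          + ((c + d - 2 * α₂) ^ 2 + (c + d - 2 * β₂) ^ 2) / 8) * M := by ring
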